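/- arXiv:2409.13263 — 5 statements merged into one kernel-verified Lean document; each statement's English description precedes it below -/
import Mathlib

section
/- For coprime positive integers a, b with b ≥ 2 (so that a/b is not an integer) and any positive integer k, the Taylor expansion in x around 0 of the function Ψ(x) = ((1+x)^{a/b} + 1)^{bk} has infinitely many negative coefficients. -/
open Filter Finset Real

noncomputable def st0Pp (γ : ℝ) (h : ℕ) : ℝ := ∏ i ∈ Finset.range h, (γ - i)

lemma st0Pp_succ (γ : ℝ) (h : ℕ) : st0Pp γ (h + 1) = st0Pp γ h * (γ - h) :=
  Finset.prod_range_succ _ _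

lemma st0Pp_ne_zero {γ : ℝ} (hγ : ∀ m : ℕ, γ ≠ m) (h : ℕ) : st0Pp γ h ≠ 0 :=
  Finset.prod_ne_zero_iff.2 fun i _ => sub_ne_zero.2 (hγ i)

lemma st0Pp_eq_zero {γ : ℝ} {m h : ℕ} (hγ : γ = m) (hm : m < h) : st0Pp γ h = 0 :=
  Finset.prod_eq_zero (Finset.mem_range.2 hm) (by simp [hγ])

lemma st0_ratio_tendsto {α β : ℝ} (hα0 : 0 < α) (hαβ : α < β) :
    Filter.Tendsto (fun h : ℕ => |st0Pp β h| / |st0Pp α h|) Filter.atTop (nhds 0) := by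
  set H0 : ℕ := ⌈β⌉₊ + 1 with hH0
  have hβH0 : β < (H0 : ℝ) := by
    calc β ≤ ⌈β⌉₊ := Nat.le_ceil β
    _ < (H0 : ℝ) := by exact_mod_cast Nat.lt_succ_self _
  set q : ℕ → ℝ := fun h => |st0Pp β h| / |st0Pp α h| with hq
  set S : ℕ → ℝ := fun m => ∑ i ∈ Finset.range m, 1 / ((H0 : ℝ) + i) with hS
  -- key bound
  have key : ∀ m : ℕ, q (H0 + m) ≤ q H0 * Real.exp (-(β - α) * S m) := by
    intro m
    induction m with
    | zero => simp [hS]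
    | succ m ih =>
      have hX : β < (H0 : ℝ) + m := by
        have : (0:ℝ) ≤ m := Nat.cast_nonneg m
        linarith
      have hXα : α < (H0 : ℝ) + m := lt_trans hαβ hX
      have hXpos : (0:ℝ) < (H0 : ℝ) + m := lt_trans (lt_trans hα0 hαβ) hX
      have hrec : q (H0 + (m + 1)) =
          q (H0 + m) * ((((H0 : ℝ) + m) - β) / (((H0 : ℝ) + m) - α)) := by
        have hadd : H0 + (m + 1) = (H0 + m) + 1 := by omega
        have e1 : st0Pp β (H0 + (m + 1)) = st0Pp β (H0 + m) * (β - ((H0 : ℝ) + m)) := by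
          rw [hadd, st0Pp_succ]; push_cast; ring_nf
        have e2 : st0Pp α (H0 + (m + 1)) = st0Pp α (H0 + m) * (α - ((H0 : ℝ) + m)) := by
          rw [hadd, st0Pp_succ]; push_cast; ring_nf
        simp only [hq, e1, e2, abs_mul]
        rw [mul_div_mul_comm]
        congr 1
        rw [abs_sub_comm β, abs_sub_comm α, abs_of_pos (by linarith), abs_of_pos (by linarith)]
      have hfac : (((H0 : ℝ) + m) - β) / (((H0 : ℝ) + m) - α) ≤
          Real.exp (-(β - α) / ((H0 : ℝ) + m)) := by
        have h1 : (((H0 : ℝ) + m) - β) / (((H0 : ℝ) + m) - α) = 1 - (β - α) / (((H0 : ℝ) + m) - α) := by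
          rw [one_sub_div (by linarith : ((H0 : ℝ) + m) - α ≠ 0)]
          congr 1
          ring
        have h2 : (β - α) / ((H0 : ℝ) + m) ≤ (β - α) / (((H0 : ℝ) + m) - α) :=
          div_le_div_of_nonneg_left (by linarith) (by linarith) (by linarith)
        have h3 : -(β - α) / ((H0 : ℝ) + m) + 1 ≤ Real.exp (-(β - α) / ((H0 : ℝ) + m)) :=
          Real.add_one_le_exp _
        rw [h1]
        have : -(β - α) / ((H0 : ℝ) + m) = -((β - α) / ((H0 : ℝ) + m)) := by ring
        nlinarith [h2, h3]
      have hq0 : 0 ≤ q (H0 + m) := div_nonneg (abs_nonneg _) (abs_nonneg _)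
      have hfac0 : 0 < (((H0 : ℝ) + m) - β) / (((H0 : ℝ) + m) - α) :=
        div_pos (by linarith) (by linarith)
      calc q (H0 + (m + 1)) = q (H0 + m) * ((((H0 : ℝ) + m) - β) / (((H0 : ℝ) + m) - α)) := hrec
      _ ≤ (q H0 * Real.exp (-(β - α) * S m)) * Real.exp (-(β - α) / ((H0 : ℝ) + m)) := by
          apply mul_le_mul ih hfac hfac0.le
          positivity
      _ = q H0 * Real.exp (-(β - α) * S (m + 1)) := by
          rw [mul_assoc, ← Real.exp_add]
          congr 2
          rw [hS]
          simp only [Finset.sum_range_succ]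
          ring
  -- S tends to atTop
  have hStop : Filter.Tendsto S Filter.atTop Filter.atTop := by
    have hH0pos : (0:ℝ) < H0 := by positivity
    have hmono : ∀ m, ((H0:ℝ))⁻¹ * ∑ i ∈ Finset.range m, (1 / ((i : ℝ) + 1)) ≤ S m := by
      intro m
      rw [Finset.mul_sum]
      apply Finset.sum_le_sum
      intro i _
      have h1 : (0:ℝ) < (i : ℝ) + 1 := by positivity
      have h2 : (0:ℝ) < (H0 : ℝ) + i := by positivity
      have hH1 : (1:ℝ) ≤ H0 := by exact_mod_cast Nat.one_le_iff_ne_zero.2 (by omega)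
      rw [one_div, one_div, ← mul_inv]
      have hle : (H0 : ℝ) + i ≤ (H0 : ℝ) * ((i : ℝ) + 1) := by nlinarith
      gcongr
    apply Filter.tendsto_atTop_mono hmono
    exact (tendsto_sum_range_one_div_nat_succ_atTop).const_mul_atTop (by positivity)
  -- conclude
  have hexp : Filter.Tendsto (fun m => q H0 * Real.exp (-(β - α) * S m)) Filter.atTop (nhds 0) := by
    have h1 : Filter.Tendsto (fun m => -(β - α) * S m) Filter.atTop Filter.atBot := by
      apply Filter.Tendsto.const_mul_atTop_of_neg (by linarith) hStop
    have h2 := Real.tendsto_exp_atBot.comp h1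
    simpa using h2.const_mul (q H0)
  rw [← Filter.tendsto_add_atTop_iff_nat H0]
  apply squeeze_zero (fun m => div_nonneg (abs_nonneg _) (abs_nonneg _)) _ hexp
  intro m
  simpa [add_comm] using key m

lemma st0_iteratedDeriv (a b k : ℕ) (hb : 0 < b) :
    ∀ (h : ℕ) (x : ℝ), x ∈ Set.Ioi (-1:ℝ) →
    iteratedDeriv h (fun x : ℝ => ((1 + x) ^ ((a : ℝ) / b) + 1) ^ (b * k)) x
      = ∑ j ∈ Finset.range (b * k + 1), ((b * k).choose j : ℝ) * st0Pp ((a : ℝ) / b * j) h *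
          (1 + x) ^ ((a : ℝ) / b * j - h) := by
  intro h
  induction h with
  | zero =>
    intro x hx
    have h1x : (0:ℝ) < 1 + x := by have := Set.mem_Ioi.1 hx; linarith
    rw [iteratedDeriv_zero, add_pow]
    refine Finset.sum_congr rfl fun j hj => ?_
    have e1 : ((1 + x) ^ ((a : ℝ) / b)) ^ j = (1 + x) ^ ((a : ℝ) / b * j) := by
      rw [Real.rpow_mul h1x.le, Real.rpow_natCast]
    rw [e1]
    simp [st0Pp]
    ring
  | succ h ih =>
    intro x hx
    have h1x : (0:ℝ) < 1 + x := by have := Set.mem_Ioi.1 hx; linarith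
    rw [iteratedDeriv_succ]
    have hev : iteratedDeriv h (fun x : ℝ => ((1 + x) ^ ((a : ℝ) / b) + 1) ^ (b * k)) =ᶠ[nhds x]
        fun y => ∑ j ∈ Finset.range (b * k + 1), ((b * k).choose j : ℝ) * st0Pp ((a : ℝ) / b * j) h *
          (1 + y) ^ ((a : ℝ) / b * j - h) := by
      filter_upwards [isOpen_Ioi.mem_nhds hx] with y hy using ih y hy
    rw [hev.deriv_eq]
    have hder : HasDerivAt (fun y : ℝ => ∑ j ∈ Finset.range (b * k + 1),
        ((b * k).choose j : ℝ) * st0Pp ((a : ℝ) / b * j) h * (1 + y) ^ ((a : ℝ) / b * j - h))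
        (∑ j ∈ Finset.range (b * k + 1), ((b * k).choose j : ℝ) * st0Pp ((a : ℝ) / b * j) (h + 1)
          * (1 + x) ^ ((a : ℝ) / b * j - (h + 1 : ℕ))) x := by
      apply HasDerivAt.fun_sum
      intro j hj
      have hbase : HasDerivAt (fun y : ℝ => (1 + y) ^ ((a : ℝ) / b * j - h))
          (1 * ((a : ℝ) / b * j - h) * (1 + x) ^ ((a : ℝ) / b * j - h - 1)) x := by
        exact (HasDerivAt.const_add 1 (hasDerivAt_id x)).rpow_const (Or.inl h1x.ne')
      have := hbase.const_mul (((b * k).choose j : ℝ) * st0Pp ((a : ℝ) / b * j) h)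
      convert this using 1
      case e'_4 => rfl
      rw [st0Pp_succ]
      push_cast
      ring_nf
    rw [hder.deriv]

/-- For coprime positive integers `a`, `b` with `b ≥ 2` (so `a/b ∉ ℤ`) and any
positive integer `k`, the Taylor expansion at `0` of `Ψ x = ((1+x)^(a/b) + 1)^(b*k)` has
infinitely many negative coefficients.  The `h`-th Taylor coefficient is
`iteratedDeriv h Ψ 0 / h!`, whose sign is that of `iteratedDeriv h Ψ 0`. -/
theorem stmt0 (a b k : ℕ) (ha : 0 < a) (hb : 2 ≤ b) (hk : 0 < k)
    (hcop : Nat.Coprime a b) :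
    {h : ℕ |
      iteratedDeriv h (fun x : ℝ => ((1 + x) ^ ((a : ℝ) / b) + 1) ^ (b * k)) 0 / h.factorial
        < 0}.Infinite := by
  have hb0 : 0 < b := by omega
  set n := b * k with hn
  have hn2 : 2 ≤ n := by
    calc 2 = 2 * 1 := by norm_num
    _ ≤ b * k := Nat.mul_le_mul hb hk
  set α : ℝ := (a : ℝ) / b with hα
  have hα0 : 0 < α := div_pos (by exact_mod_cast ha) (by exact_mod_cast hb0)
  -- non-integrality
  have hnotint : ∀ j : ℕ, ¬ b ∣ j → ∀ m : ℕ, α * j ≠ m := by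
    intro j hj m he
    apply hj
    have hbne : (b : ℝ) ≠ 0 := by positivity
    have h1 : (a : ℝ) * j = (m : ℝ) * b := by
      rw [hα, div_mul_eq_mul_div, div_eq_iff hbne] at he
      linarith [he]
    have h2 : a * j = m * b := by exact_mod_cast h1
    have h3 : b ∣ a * j := ⟨m, by rw [h2, Nat.mul_comm]⟩
    exact hcop.symm.dvd_of_dvd_mul_left h3
  have hnd1 : ¬ b ∣ 1 := fun hd => absurd (Nat.le_of_dvd one_pos hd) (by omega)
  have hα_not_nat : ∀ m : ℕ, α ≠ m := by
    intro m
    have := hnotint 1 hnd1 m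
    simpa using this
  -- vanishing of integer-exponent terms
  have hvanish : ∀ j ∈ Finset.range (n + 1), b ∣ j → ∀ h : ℕ, a * k + 1 ≤ h →
      st0Pp (α * j) h = 0 := by
    intro j hj hd h hh
    obtain ⟨t, rfl⟩ := hd
    have htk : t ≤ k := by
      have := Finset.mem_range.1 hj
      have hble : b * t ≤ b * k := by omega
      exact Nat.le_of_mul_le_mul_left hble hb0
    have he : α * ((b * t : ℕ) : ℝ) = ((a * t : ℕ) : ℝ) := by
      rw [hα]; push_cast
      field_simp
    exact st0Pp_eq_zero he (by calc a * t ≤ a * k := Nat.mul_le_mul_left a htk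
                                  _ < h := by omega)
  -- coefficient formula
  have hcoef : ∀ h : ℕ,
      iteratedDeriv h (fun x : ℝ => ((1 + x) ^ ((a : ℝ) / b) + 1) ^ (b * k)) 0
        = ∑ j ∈ Finset.range (n + 1), (n.choose j : ℝ) * st0Pp (α * j) h := by
    intro h
    have := st0_iteratedDeriv a b k hb0 h 0 (by norm_num)
    rw [this]
    refine Finset.sum_congr rfl fun j hj => ?_
    norm_num
    rfl
  -- eventual domination
  set ε : ℝ := ((2 : ℝ) * 2 ^ n)⁻¹ with hεdef
  have hε : 0 < ε := by positivity
  set T := (Finset.range (n + 1)).erase 1 with hT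
  have hev : ∀ᶠ h in Filter.atTop, ∀ j ∈ T, |st0Pp (α * j) h| ≤ ε * |st0Pp (α * 1) h| := by
    rw [Filter.eventually_all_finset]
    intro j hj
    by_cases hd : b ∣ j
    · filter_upwards [Filter.eventually_ge_atTop (a * k + 1)] with h hh
      rw [hvanish j (Finset.mem_of_mem_erase hj) hd h hh]
      have : (0:ℝ) ≤ ε * |st0Pp (α * 1) h| := by positivity
      simpa using this
    · have hj1 : j ≠ 1 := Finset.ne_of_mem_erase hj
      have hj0 : j ≠ 0 := fun h0 => hd (h0 ▸ Dvd.intro 0 rfl)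
      have h2j : 2 ≤ j := by omega
      have hαβ : α * 1 < α * j := by
        have : (2 : ℝ) ≤ (j : ℝ) := by exact_mod_cast h2j
        nlinarith
    -- tendsto
      have hα1 : 0 < α * 1 := by simpa using hα0
      have hα1nat : ∀ m : ℕ, α * 1 ≠ m := by simpa using hα_not_nat
      have htend := (st0_ratio_tendsto hα1 hαβ).eventually_lt_const hε
      filter_upwards [htend] with h hlt
      have hpos : 0 < |st0Pp (α * 1) h| := abs_pos.2 (st0Pp_ne_zero hα1nat h)
      have := (div_lt_iff₀ hpos).1 hlt
      nlinarith
  -- eventually: P1 negative implies coefficient negative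
  have hneg : ∀ᶠ h in Filter.atTop, st0Pp α h < 0 →
      iteratedDeriv h (fun x : ℝ => ((1 + x) ^ ((a : ℝ) / b) + 1) ^ (b * k)) 0 < 0 := by
    filter_upwards [hev] with h hevh hP1
    rw [hcoef h]
    have h1mem : 1 ∈ Finset.range (n + 1) := Finset.mem_range.2 (by omega)
    rw [← Finset.add_sum_erase _ _ h1mem]
    have hP1' : st0Pp (α * 1) h = st0Pp α h := by rw [mul_one]
    have habs : |st0Pp α h| = -st0Pp α h := abs_of_neg hP1
    have hR : |∑ j ∈ T, (n.choose j : ℝ) * st0Pp (α * j) h| ≤ (2 : ℝ) ^ n * (ε * |st0Pp α h|) := by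
      calc |∑ j ∈ T, (n.choose j : ℝ) * st0Pp (α * j) h|
          ≤ ∑ j ∈ T, |(n.choose j : ℝ) * st0Pp (α * j) h| := Finset.abs_sum_le_sum_abs _ _
        _ ≤ ∑ j ∈ T, (n.choose j : ℝ) * (ε * |st0Pp α h|) := by
            refine Finset.sum_le_sum fun j hj => ?_
            rw [abs_mul, abs_of_nonneg (by positivity : (0:ℝ) ≤ (n.choose j : ℝ))]
            refine mul_le_mul_of_nonneg_left ?_ (by positivity)
            have := hevh j hj
            rwa [hP1'] at this
        _ ≤ ∑ j ∈ Finset.range (n + 1), (n.choose j : ℝ) * (ε * |st0Pp α h|) := by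
            refine Finset.sum_le_sum_of_subset_of_nonneg (Finset.erase_subset _ _) ?_
            intro j _ _
            positivity
        _ = (2 : ℝ) ^ n * (ε * |st0Pp α h|) := by
            rw [← Finset.sum_mul]
            congr 1
            rw [← Nat.cast_sum, Nat.sum_range_choose]
            push_cast
            ring
    have h2 : (2 : ℝ) ^ n * (ε * |st0Pp α h|) = |st0Pp α h| / 2 := by
      rw [hεdef]
      have : (2:ℝ) ^ n ≠ 0 := by positivity
      field_simp
    have hch1 : (n.choose 1 : ℝ) = (n : ℝ) := by rw [Nat.choose_one_right]
    have hn2' : (2 : ℝ) ≤ (n : ℝ) := by exact_mod_cast hn2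
    have hRb := (abs_le.1 (hR.trans h2.le)).2
    have hnP : (n : ℝ) * st0Pp α h ≤ 2 * st0Pp α h := by nlinarith
    simp only [Nat.cast_one, hP1', hch1]
    rw [habs] at hRb
    linarith
  -- find starting point
  obtain ⟨N, hN⟩ := Filter.eventually_atTop.1 hneg
  set M : ℕ := max N (⌈α⌉₊ + 1) with hM
  have hαM : α < (M : ℝ) := by
    calc α ≤ (⌈α⌉₊ : ℝ) := Nat.le_ceil α
    _ < ((⌈α⌉₊ + 1 : ℕ) : ℝ) := by exact_mod_cast Nat.lt_succ_self _
    _ ≤ (M : ℝ) := by exact_mod_cast le_max_right _ _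
  have hne := st0Pp_ne_zero hα_not_nat
  have key2 : ∃ h1, M ≤ h1 ∧ st0Pp α h1 < 0 := by
    rcases lt_or_gt_of_ne (hne M) with hlt | hgt
    · exact ⟨M, le_refl _, hlt⟩
    · refine ⟨M + 1, Nat.le_succ _, ?_⟩
      rw [st0Pp_succ]
      exact mul_neg_of_pos_of_neg hgt (by linarith)
  obtain ⟨h1, hh1M, hh1neg⟩ := key2
  have hstep : ∀ h : ℕ, α < (h : ℝ) → st0Pp α h < 0 → st0Pp α (h + 2) < 0 := by
    intro h hαh hPh
    have : st0Pp α (h + 2) = st0Pp α h * ((α - h) * (α - (h + 1 : ℕ))) := by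
      show st0Pp α (h + 1 + 1) = _
      rw [st0Pp_succ, st0Pp_succ]
      push_cast
      ring
    rw [this]
    apply mul_neg_of_neg_of_pos hPh
    apply mul_pos_of_neg_of_neg (by linarith)
    push_cast
    linarith
  have hallneg : ∀ m : ℕ, st0Pp α (h1 + 2 * m) < 0 := by
    intro m
    induction m with
    | zero => simpa using hh1neg
    | succ m ih =>
      have he : h1 + 2 * (m + 1) = (h1 + 2 * m) + 2 := by omega
      rw [he]
      apply hstep _ _ ih
      have : (M : ℝ) ≤ ((h1 + 2 * m : ℕ) : ℝ) := by exact_mod_cast (by omega : M ≤ h1 + 2 * m)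
      linarith
  apply Set.infinite_of_injective_forall_mem (f := fun m : ℕ => h1 + 2 * m)
  · intro m1 m2 hm
    simp only at hm
    omega
  · intro m
    have hNM : N ≤ M := le_max_left _ _
    have hge : N ≤ h1 + 2 * m := by omega
    have hD := hN (h1 + 2 * m) hge (hallneg m)
    have hfac : (0 : ℝ) < ((h1 + 2 * m).factorial : ℝ) :=
      Nat.cast_pos.2 (Nat.factorial_pos _)
    exact div_neg_of_neg_of_pos hD hfac
end

section
/- Let a, b, k be positive integers. For h > 0 define B_{h,p} = C(kb, p) · (pa/b)(pa/b − 1)···(pa/b − (h−1)) for 0 ≤ p ≤ kb, and A_h = Σ_{p=0}^{kb} B_{h,p}. Then for every p with 2 ≤ p ≤ kb, lim_{h→∞} B_{h,p}/B_{h,1} = 0, provided b does not divide a (so the denominators are nonzero). -/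
open Filter

/-- with `B_{h,p} = C(kb,p) ∏_{j=0}^{h-1} (pa/b − j)`, for every `p` with
`2 ≤ p ≤ kb` one has `B_{h,p}/B_{h,1} → 0` as `h → ∞`, provided `b ∤ a`. -/
theorem stmt1 (a b k : ℕ) (ha : 0 < a) (hb : 0 < b) (hk : 0 < k) (hnd : ¬ b ∣ a) :
    ∀ p : ℕ, 2 ≤ p → p ≤ k * b →
      Tendsto
        (fun h : ℕ =>
          ((Nat.choose (k * b) p : ℝ) * ∏ j ∈ Finset.range h, ((p * a : ℝ) / b - j)) /
            ((Nat.choose (k * b) 1 : ℝ) * ∏ j ∈ Finset.range h, ((a : ℝ) / b - j)))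
        atTop (nhds 0) := by
  intro p hp2 hpk
  have hbR : (0:ℝ) < b := by positivity
  set x : ℝ := (a:ℝ) / b with hxdef
  set c : ℝ := ((p:ℝ) * a) / b with hcdef
  have hx_pos : 0 < x := by positivity
  have hcx : x < c := by
    rw [hxdef, hcdef, div_lt_div_iff₀ hbR hbR]
    have hp1 : (1:ℝ) < p := by exact_mod_cast lt_of_lt_of_le one_lt_two hp2
    have haR : (0:ℝ) < a := by positivity
    nlinarith [mul_pos haR hbR]
  have hx_ne : ∀ j : ℕ, x - (j:ℝ) ≠ 0 := by
    intro j h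
    apply hnd
    have hax : (a:ℝ) = j * b := by
      have : x = j := by linarith
      rw [hxdef, div_eq_iff (ne_of_gt hbR)] at this
      linarith [this]
    have : a = j * b := by exact_mod_cast hax
    exact Dvd.intro j (by linarith)
  set g : ℕ → ℝ := fun j => (c - j) / (x - j) with hgdef
  -- core: ∏_{j<h} g j → 0
  have hcore : Tendsto (fun h : ℕ => ∏ j ∈ Finset.range h, g j) atTop (nhds 0) := by
    set N : ℕ := ⌈c⌉₊ + 1 with hNdef
    have hNc : ∀ j : ℕ, N ≤ j → c < j := by
      intro j hj
      have h1 : c ≤ (⌈c⌉₊ : ℝ) := Nat.le_ceil c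
      have h2 : ((⌈c⌉₊ : ℕ) : ℝ) < j := by exact_mod_cast Nat.lt_of_lt_of_le (Nat.lt_succ_self _) hj
      linarith
    have hNx : ∀ j : ℕ, N ≤ j → x < j := fun j hj => lt_trans hcx (hNc j hj)
    -- sum S h
    set S : ℕ → ℝ := fun h => ∑ j ∈ Finset.Ico N h, (c - x) / ((j:ℝ) - x) with hSdef
    have hS_atTop : Tendsto S atTop atTop := by
      have hH : Tendsto (fun n : ℕ => ∑ i ∈ Finset.range n, (1:ℝ) / (i + 1)) atTop atTop :=
        Real.tendsto_sum_range_one_div_nat_succ_atTop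
      have hH' : Tendsto (fun n : ℕ => (c - x) * ((∑ i ∈ Finset.range n, (1:ℝ) / (i + 1))
          - ∑ i ∈ Finset.range N, (1:ℝ) / (i + 1))) atTop atTop := by
        apply Tendsto.const_mul_atTop (by linarith : (0:ℝ) < c - x)
        exact tendsto_atTop_add_const_right _ _ hH
      apply tendsto_atTop_mono' _ _ hH'
      filter_upwards [eventually_ge_atTop N] with h hh
      have hsplit : ∑ i ∈ Finset.Ico N h, (1:ℝ)/(i+1)
          = ∑ i ∈ Finset.range h, (1:ℝ)/(i+1) - ∑ i ∈ Finset.range N, (1:ℝ)/(i+1) :=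
        Finset.sum_Ico_eq_sub _ hh
      rw [← hsplit, Finset.mul_sum]
      apply Finset.sum_le_sum
      intro j hj
      have hjN : N ≤ j := (Finset.mem_Ico.mp hj).1
      have hxj : x < j := hNx j hjN
      have hj1 : (0:ℝ) < (j:ℝ) - x := by linarith
      have hj2 : (j:ℝ) - x ≤ (j:ℝ) + 1 := by linarith
      have : (1:ℝ)/(j+1) ≤ 1/((j:ℝ) - x) := by
        apply one_div_le_one_div_of_le hj1 hj2
      calc (c - x) * ((1:ℝ)/(j+1)) ≤ (c - x) * (1/((j:ℝ) - x)) := by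
            apply mul_le_mul_of_nonneg_left this (by linarith)
        _ = (c - x) / ((j:ℝ) - x) := by ring
    -- tail product → 0
    have htail : Tendsto (fun h : ℕ => ∏ j ∈ Finset.Ico N h, g j) atTop (nhds 0) := by
      rw [tendsto_zero_iff_abs_tendsto_zero]
      refine squeeze_zero' (g := fun h => Real.exp (-(S h)))
        (Eventually.of_forall fun h => abs_nonneg _) ?_ ?_
      · filter_upwards [eventually_ge_atTop N] with h hh
        show |∏ j ∈ Finset.Ico N h, g j| ≤ Real.exp (-(S h))
        rw [Finset.abs_prod]
        calc ∏ j ∈ Finset.Ico N h, |g j|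
            ≤ ∏ j ∈ Finset.Ico N h, Real.exp (-((c - x)/((j:ℝ) - x))) := by
              apply Finset.prod_le_prod
              · intro j _; exact abs_nonneg _
              · intro j hj
                have hjN : N ≤ j := (Finset.mem_Ico.mp hj).1
                have hxj : x < j := hNx j hjN
                have hcj : c < j := hNc j hjN
                have hgj : g j = ((j:ℝ) - c) / ((j:ℝ) - x) := by
                  rw [hgdef]
                  simp only
                  rw [← neg_div_neg_eq]
                  congr 1 <;> ring
                have hgpos : 0 ≤ g j := by
                  rw [hgj]
                  apply div_nonneg <;> linarith
                rw [abs_of_nonneg hgpos, hgj]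
                have h1 : ((j:ℝ) - c)/((j:ℝ) - x) = 1 - (c - x)/((j:ℝ) - x) := by
                  have hne : (j:ℝ) - x ≠ 0 := by linarith
                  field_simp
                  ring
                rw [h1]
                have := Real.add_one_le_exp (-((c - x)/((j:ℝ) - x)))
                linarith
          _ = Real.exp (-(S h)) := by
              rw [← Real.exp_sum, hSdef, ← Finset.sum_neg_distrib]
      · have : Tendsto (fun h => -(S h)) atTop atBot := (tendsto_neg_atBot_iff).mpr hS_atTop
        exact Real.tendsto_exp_atBot.comp this
    -- whole product
    have hmul : Tendsto (fun h : ℕ => (∏ j ∈ Finset.range N, g j) * ∏ j ∈ Finset.Ico N h, g j)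
        atTop (nhds 0) := by
      have := htail.const_mul (∏ j ∈ Finset.range N, g j)
      simpa using this
    apply hmul.congr'
    filter_upwards [eventually_ge_atTop N] with h hh
    rw [Finset.range_eq_Ico, Finset.range_eq_Ico]
    exact Finset.prod_Ico_consecutive _ (Nat.zero_le N) hh
  -- convert to original expression
  have hC1 : (Nat.choose (k * b) 1 : ℝ) ≠ 0 := by
    have : 0 < k * b := Nat.mul_pos hk hb
    simp [Nat.choose_one_right]
    omega
  have hmain := hcore.const_mul ((Nat.choose (k * b) p : ℝ) / (Nat.choose (k * b) 1 : ℝ))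
  rw [mul_zero] at hmain
  apply hmain.congr
  intro h
  have hP2 : (∏ j ∈ Finset.range h, (x - (j:ℝ))) ≠ 0 :=
    Finset.prod_ne_zero_iff.mpr fun j _ => hx_ne j
  rw [hgdef]
  simp only
  rw [Finset.prod_div_distrib]
  rw [div_mul_div_comm]
end

section
/- Let α > 0 be a real number. If the Kähler metric on ℂ with Kähler potential Φ(ξ) = α·log(1 + |ξ|²) is projectively induced (i.e. is the pullback of the Fubini–Study metric under some holomorphic map into a complex projective space), then α is a positive integer. -/
/-- by Calabi's criterion, the metric on `ℂ` with potential
`Φ(ξ) = α log(1+|ξ|²)` is projectively induced iff all the generalized binomial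
coefficients `C(α,h) = α(α−1)⋯(α−h+1)/h!` (the Taylor coefficients of
`e^Φ − 1 = (1+|ξ|²)^α − 1`) are nonnegative.  If this holds and `α > 0`, then `α` is a
positive integer. -/
theorem stmt3 (α : ℝ) (hα : 0 < α)
    (hproj : ∀ h : ℕ, 0 ≤ (∏ j ∈ Finset.range h, (α - j)) / (h.factorial : ℝ)) :
    ∃ m : ℕ, 0 < m ∧ α = m := by
  set n : ℕ := ⌊α⌋₊ with hn
  rcases eq_or_lt_of_le (Nat.floor_le hα.le) with heq | hlt
  · refine ⟨n, ?_, heq.symm⟩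
    by_contra h
    have : (n : ℝ) = 0 := by
      have : n = 0 := Nat.eq_zero_of_not_pos h
      exact_mod_cast this
    rw [← heq, this] at hα; exact lt_irrefl _ hα
  · exfalso
    have hub : α < n + 1 := Nat.lt_floor_add_one α
    have key := hproj (n + 2)
    have hprod : (∏ j ∈ Finset.range (n + 2), (α - j)) < 0 := by
      rw [Finset.prod_range_succ]
      apply mul_neg_of_pos_of_neg
      · apply Finset.prod_pos
        intro j hj
        have hj' : j ≤ n := Nat.lt_succ_iff.mp (Finset.mem_range.mp hj)
        have : (j : ℝ) ≤ n := by exact_mod_cast hj'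
        linarith
      · push_cast; linarith
    have hfac : (0 : ℝ) < ((n + 2).factorial : ℝ) := by
      exact_mod_cast Nat.factorial_pos (n + 2)
    have := div_neg_of_neg_of_pos hprod hfac
    linarith
end

section
/- The function h(X) = −c·log(1 − X) with c = (γ + μ)/((μ+1)(d+2)) does not satisfy the ODE (μ X h′(X) + (γ+μ)/(d+2))^d · [X h′(X)]′ = k e^{(d+2) h(X)} on (0,1) for any constant k ∈ ℝ, provided γ, μ, d > 0. -/
/-- with `c = (γ+μ)/((μ+1)(d+2))`, the function `h(X) = −c log(1−X)`
does not satisfy the ODE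
`(μ X h'(X) + (γ+μ)/(d+2))^d [X h'(X)]' = k e^{(d+2) h(X)}` on `(0,1)` for any real
constant `k`; explicitly, there is no `k ∈ ℝ` such that
`(μ c X/(1−X) + (γ+μ)/(d+2))^d · c/(1−X)² = k (1−X)^{−(γ+μ)/(μ+1)}` for all `X ∈ (0,1)`. -/
theorem stmt12 (γ μ : ℝ) (d : ℕ) (hγ : 0 < γ) (hμ : 0 < μ) (hd : 1 ≤ d) :
    ¬ ∃ k : ℝ, ∀ X ∈ Set.Ioo (0 : ℝ) 1,
        (μ * ((γ + μ) / ((μ + 1) * (d + 2))) * X / (1 - X) + (γ + μ) / (d + 2)) ^ d *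
            (((γ + μ) / ((μ + 1) * (d + 2))) / (1 - X) ^ 2) =
          k * (1 - X) ^ (-((γ + μ) / (μ + 1))) := by
  rintro ⟨k, hk⟩
  set c : ℝ := (γ + μ) / ((μ + 1) * (d + 2)) with hc_def
  set a : ℝ := (γ + μ) / (d + 2) with ha_def
  set q : ℝ := -((γ + μ) / (μ + 1)) with hq_def
  have hc : 0 < c := by rw [hc_def]; positivity
  have ha : 0 < a := by rw [ha_def]; positivity
  have hac : a = c * (μ + 1) := by rw [ha_def, hc_def]; field_simp
  have h1 := hk (1/2) (by norm_num)
  have h2 := hk (3/4) (by norm_num)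
  have h3 := hk (7/8) (by norm_num)
  norm_num at h1 h2 h3
  have e2 : μ * c * (3/4) / (1/4) = 3 * (μ * c) := by ring
  have e3 : μ * c * (7/8) / (1/8) = 7 * (μ * c) := by ring
  rw [e2] at h2
  rw [e3] at h3
  -- rewrite the rpow values in terms of s := (1/2)^q
  have r2 : ((1:ℝ)/4) ^ q = (((1:ℝ)/2) ^ q) ^ (2:ℕ) := by
    rw [show ((1:ℝ)/4) = ((1:ℝ)/2) ^ ((2:ℕ):ℝ) by
          rw [Real.rpow_natCast]; norm_num,
        ← Real.rpow_natCast (((1:ℝ)/2) ^ q) 2,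
        ← Real.rpow_mul (by norm_num), ← Real.rpow_mul (by norm_num), mul_comm]
  have r3 : ((1:ℝ)/8) ^ q = (((1:ℝ)/2) ^ q) ^ (3:ℕ) := by
    rw [show ((1:ℝ)/8) = ((1:ℝ)/2) ^ ((3:ℕ):ℝ) by
          rw [Real.rpow_natCast]; norm_num,
        ← Real.rpow_natCast (((1:ℝ)/2) ^ q) 3,
        ← Real.rpow_mul (by norm_num), ← Real.rpow_mul (by norm_num), mul_comm]
  rw [r2] at h2
  rw [r3] at h3
  -- combine: E1 * E3 = E2 ^ 2 eliminates k and the rpow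
  have key : ((μ * c + a) ^ d * (c / (1/4))) * ((7 * (μ * c) + a) ^ d * (c / (1/64)))
      = ((3 * (μ * c) + a) ^ d * (c / (1/16))) ^ 2 := by
    rw [h1, h2, h3]; ring
  have h' : ((μ * c + a) * (7 * (μ * c) + a)) ^ d * (256 * c ^ 2)
      = ((3 * (μ * c) + a) ^ 2) ^ d * (256 * c ^ 2) := by
    rw [mul_pow, pow_right_comm]
    linear_combination key
  have h'' := mul_right_cancel₀ (by positivity : (256:ℝ) * c ^ 2 ≠ 0) h'
  have key3 : (μ * c + a) * (7 * (μ * c) + a) = (3 * (μ * c) + a) ^ 2 := by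
    have hb1 : (0:ℝ) ≤ (μ * c + a) * (7 * (μ * c) + a) := by positivity
    have hb2 : (0:ℝ) ≤ (3 * (μ * c) + a) ^ 2 := by positivity
    exact (pow_left_inj₀ hb1 hb2 (by omega)).mp h''
  rw [hac] at key3
  have hz : μ * c ^ 2 = 0 := by linear_combination key3 / 2
  exact absurd hz (by positivity)
end

section
/- Let μ = a/(2b) with a, b coprime positive integers, and suppose μ ∉ ℤ. Then the Taylor expansion in x around 0 of Φ(x) = (((1+x)^{a/(2b)} + 1)·(1+x)^{a/(2b)})^{bk} has at least one negative coefficient, for every positive integer k. -/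
open Finset Filter Real Topology

/-- falling factorial product -/
noncomputable def pr (h : ℕ) (t : ℝ) : ℝ := ∏ i ∈ Finset.range h, (t - i)

lemma pr_succ (h : ℕ) (t : ℝ) : pr (h+1) t = pr h t * (t - h) := Finset.prod_range_succ _ _

lemma iteratedDeriv_sum_rpow {ι : Type*} (s : Finset ι) (c e : ι → ℝ) (h : ℕ) :
    ∀ x : ℝ, -1 < x →
    iteratedDeriv h (fun y => ∑ j ∈ s, c j * (1 + y) ^ (e j)) x
      = ∑ j ∈ s, c j * pr h (e j) * (1 + x) ^ (e j - h) := by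
  induction h with
  | zero =>
    intro x hx
    simp [pr]
  | succ h ih =>
    intro x hx
    rw [iteratedDeriv_succ]
    have hev : iteratedDeriv h (fun y => ∑ j ∈ s, c j * (1 + y) ^ (e j))
        =ᶠ[nhds x] (fun y => ∑ j ∈ s, c j * pr h (e j) * (1 + y) ^ (e j - h)) := by
      filter_upwards [IsOpen.mem_nhds (isOpen_lt continuous_const continuous_id)
        (show (-1:ℝ) < x from hx)] with y hy
      exact ih y hy
    rw [hev.deriv_eq]
    have h1x : (0:ℝ) < 1 + x := by linarith
    have hd : HasDerivAt (fun y : ℝ => ∑ j ∈ s, c j * pr h (e j) * (1 + y) ^ (e j - h))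
        (∑ j ∈ s, c j * pr h (e j) * ((e j - h) * (1 + x) ^ (e j - h - 1))) x := by
      apply HasDerivAt.fun_sum
      intro j _
      have hb : HasDerivAt (fun y : ℝ => (1 + y) ^ (e j - h))
          ((e j - h) * (1 + x) ^ (e j - h - 1) * 1) x := by
        exact (Real.hasDerivAt_rpow_const (p := e j - h) (Or.inl h1x.ne')).comp x
          ((hasDerivAt_id x).const_add 1)
      simpa [mul_assoc] using (hb.const_mul (c j * pr h (e j)))
    rw [hd.deriv]
    refine Finset.sum_congr rfl fun j _ => ?_
    rw [pr_succ]
    push_cast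
    ring_nf

lemma phi_expand (μ : ℝ) (m : ℕ) (x : ℝ) (hx : -1 < x) :
    (((1 + x) ^ μ + 1) * (1 + x) ^ μ) ^ m
      = ∑ j ∈ Finset.range (m+1), (m.choose j : ℝ) * (1 + x) ^ (μ * (m + j)) := by
  have h1x : (0:ℝ) < 1 + x := by linarith
  rw [mul_pow, add_pow]
  rw [Finset.sum_mul]
  refine Finset.sum_congr rfl fun j hj => ?_
  have hpow : ∀ n : ℕ, ((1 + x) ^ μ) ^ n = (1 + x) ^ (μ * n) := by
    intro n
    rw [← Real.rpow_natCast ((1+x)^μ) n, ← Real.rpow_mul h1x.le]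
  rw [hpow, hpow, one_pow, mul_one,
    show μ * ((m:ℝ) + j) = μ * j + μ * m by ring, Real.rpow_add h1x]
  ring

lemma pr_split (H h : ℕ) (t : ℝ) (hHh : H ≤ h) :
    pr h t = pr H t * ((-1:ℝ)^(h-H) * ∏ i ∈ Finset.Ico H h, ((i:ℝ) - t)) := by
  unfold pr
  rw [Finset.range_eq_Ico, ← Finset.prod_Ico_consecutive _ (Nat.zero_le H) hHh]
  congr 1
  · rw [Finset.range_eq_Ico]
  have : ∀ i ∈ Finset.Ico H h, t - (i:ℝ) = (-1) * ((i:ℝ) - t) := fun i _ => by ring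
  rw [Finset.prod_congr rfl this, Finset.prod_mul_distrib, Finset.prod_const,
    Nat.card_Ico]

lemma pr_int_zero (t : ℝ) (z : ℤ) (hz : t = z) (h0 : 0 < t) (h : ℕ) (hN : t < h) :
    pr h t = 0 := by
  have hz0 : 0 < z := by exact_mod_cast hz ▸ h0
  have hlt : z.toNat < h := by
    have h1 : (z:ℝ) < (h:ℕ) := hz ▸ hN
    have h2 : z < (h:ℤ) := by exact_mod_cast h1
    omega
  refine Finset.prod_eq_zero (Finset.mem_range.2 hlt) ?_
  rw [hz]
  have : ((z.toNat : ℕ) : ℝ) = (z:ℝ) := by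
    norm_cast
    omega
  rw [this, sub_self]

lemma R_pos (H h : ℕ) (t : ℝ) (ht : t < H) :
    0 < ∏ i ∈ Finset.Ico H h, ((i:ℝ) - t) := by
  apply Finset.prod_pos
  intro i hi
  have h1 := (Finset.mem_Ico.1 hi).1
  have : (H:ℝ) ≤ i := by exact_mod_cast h1
  linarith

lemma R_ratio (H h : ℕ) (μ t s : ℝ) (hμ : 0 < μ) (h0 : 0 < t) (hts : t + μ ≤ s)
    (hsH : s < H) :
    ∏ i ∈ Finset.Ico H h, ((i:ℝ) - s)
      ≤ (∏ i ∈ Finset.Ico H h, ((i:ℝ) - t))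
        * Real.exp (-(μ * ∑ i ∈ Finset.Ico H h, 1/((i:ℝ)+1))) := by
  have step : ∏ i ∈ Finset.Ico H h, ((i:ℝ) - s)
      ≤ ∏ i ∈ Finset.Ico H h, (((i:ℝ) - t) * Real.exp (-(μ * (1/((i:ℝ)+1))))) := by
    apply Finset.prod_le_prod
    · intro i hi
      have h1 := (Finset.mem_Ico.1 hi).1
      have h2 : (H:ℝ) ≤ i := by exact_mod_cast h1
      linarith
    · intro i hi
      have h1 := (Finset.mem_Ico.1 hi).1
      have h2 : (H:ℝ) ≤ i := by exact_mod_cast h1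
      have hi1 : (0:ℝ) < (i:ℝ) + 1 := by positivity
      have e1 : 1 - μ * (1/((i:ℝ)+1)) ≤ Real.exp (-(μ * (1/((i:ℝ)+1)))) := by
        have := Real.add_one_le_exp (-(μ * (1/((i:ℝ)+1))))
        linarith
      have hq : μ * (1/((i:ℝ)+1)) * ((i:ℝ)+1) = μ := by field_simp
      have hit : 0 < (i:ℝ) - t := by linarith
      nlinarith [mul_le_mul_of_nonneg_left e1 hit.le]
  calc ∏ i ∈ Finset.Ico H h, ((i:ℝ) - s)
      ≤ ∏ i ∈ Finset.Ico H h, (((i:ℝ) - t) * Real.exp (-(μ * (1/((i:ℝ)+1))))) := step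
    _ = (∏ i ∈ Finset.Ico H h, ((i:ℝ) - t))
        * Real.exp (-(μ * ∑ i ∈ Finset.Ico H h, 1/((i:ℝ)+1))) := by
      rw [Finset.prod_mul_distrib, ← Real.exp_sum]
      congr 1
      rw [Finset.sum_neg_distrib, ← Finset.mul_sum]

lemma main_neg (μ : ℝ) (hμ : 0 < μ) (hμni : ∀ z : ℤ, μ ≠ z) (m N : ℕ) (hm : 0 < m)
    (hbound : ∀ j : ℕ, j ≤ m → μ * ((m:ℝ) + j) ≤ N) :
    ∃ h : ℕ, ∑ j ∈ Finset.range (m+1), (m.choose j : ℝ) * pr h (μ * ((m:ℝ) + j)) < 0 := by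
  classical
  set e : ℕ → ℝ := fun j => μ * ((m:ℝ) + j) with he
  suffices hgoal : ∃ h : ℕ, ∑ j ∈ Finset.range (m+1), (m.choose j : ℝ) * pr h (e j) < 0 by
    exact hgoal
  have hepos : ∀ j : ℕ, 0 < e j := by
    intro j
    have hm' : (0:ℝ) < m := by exact_mod_cast hm
    have : (0:ℝ) < (m:ℝ) + j := by positivity
    exact mul_pos hμ this
  have hestep : ∀ j j' : ℕ, j < j' → e j + μ ≤ e j' := by
    intro j j' hjj
    have h1 : (j:ℝ) + 1 ≤ j' := by exact_mod_cast hjj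
    have := mul_le_mul_of_nonneg_left (show (1:ℝ) ≤ (j':ℝ) - j by linarith) hμ.le
    simp only [he]
    nlinarith
  set Q : ℕ → Prop := fun j => ¬ ∃ z : ℤ, e j = z with hQdef
  have hQ01 : Q 0 ∨ Q 1 := by
    by_contra hc
    push_neg at hc
    obtain ⟨hc0, hc1⟩ := hc
    simp only [hQdef, not_not] at hc0 hc1
    obtain ⟨z0, hz0⟩ := hc0
    obtain ⟨z1, hz1⟩ := hc1
    apply hμni (z1 - z0)
    have hd : e 1 - e 0 = μ := by simp only [he]; push_cast; ring
    push_cast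
    rw [← hz0, ← hz1]
    linarith
  set j0 : ℕ := if Q 0 then 0 else 1 with hj0def
  have hQj0 : Q j0 := by
    by_cases h0 : Q 0
    · rw [hj0def, if_pos h0]; exact h0
    · rw [hj0def, if_neg h0]; exact hQ01.resolve_left h0
  have hj0m : j0 ≤ m := by
    rw [hj0def]; split_ifs <;> omega
  have hj0min : ∀ j : ℕ, Q j → j ≠ j0 → j0 < j := by
    intro j hj hne
    by_cases h0 : Q 0
    · have hh : j0 = 0 := by rw [hj0def, if_pos h0]
      omega
    · have hh : j0 = 1 := by rw [hj0def, if_neg h0]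
      have : j ≠ 0 := fun hj0 => h0 (hj0 ▸ hj)
      omega
  set H : ℕ := N + 1 with hHdef
  have heH : ∀ j : ℕ, j ≤ m → e j < H := by
    intro j hj
    have h1 : e j ≤ N := hbound j hj
    have h2 : (N:ℝ) < H := by exact_mod_cast Nat.lt_succ_self N
    linarith
  set T := (Finset.range (m+1)).filter Q with hTdef
  have hj0T : j0 ∈ T := Finset.mem_filter.2 ⟨Finset.mem_range.2 (by omega), hQj0⟩
  set R : ℕ → ℝ → ℝ := fun h t => ∏ i ∈ Finset.Ico H h, ((i:ℝ) - t) with hRdef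
  set S : ℕ → ℝ := fun h => ∑ i ∈ Finset.Ico H h, 1/((i:ℝ)+1) with hSdef
  have hprH0 : pr H (e j0) ≠ 0 := by
    apply Finset.prod_ne_zero_iff.2
    intro i _ hzero
    exact hQj0 ⟨(i : ℤ), by push_cast; linarith [sub_eq_zero.1 hzero]⟩
  set c0 : ℝ := (m.choose j0 : ℝ) * |pr H (e j0)| with hc0def
  have hc0 : 0 < c0 := by
    apply mul_pos _ (abs_pos.2 hprH0)
    exact_mod_cast Nat.choose_pos hj0m
  set M : ℝ := ∑ j ∈ T, (m.choose j : ℝ) * |pr H (e j)| with hMdef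
  have hS : Tendsto S atTop atTop := by
    have hA : Tendsto (fun n : ℕ => (∑ i ∈ Finset.range n, (1 / ((i:ℝ) + 1)))
        + (-∑ i ∈ Finset.range H, (1 / ((i:ℝ) + 1)))) atTop atTop :=
      tendsto_atTop_add_const_right _ _ tendsto_sum_range_one_div_nat_succ_atTop
    apply hA.congr'
    filter_upwards [eventually_ge_atTop H] with h hh
    simp only [hSdef]
    rw [Finset.range_eq_Ico,
      ← Finset.sum_Ico_consecutive (fun i : ℕ => 1/((i:ℝ)+1)) (Nat.zero_le H) hh]
    rw [← Finset.range_eq_Ico]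
    ring
  have htend : Tendsto (fun h => M * Real.exp (-(μ * S h))) atTop (𝓝 0) := by
    have h1 : Tendsto (fun h => μ * S h) atTop atTop := hS.const_mul_atTop hμ
    have h2 : Tendsto (fun h => -(μ * S h)) atTop atBot := tendsto_neg_atTop_atBot.comp h1
    have h3 : Tendsto (fun h => Real.exp (-(μ * S h))) atTop (𝓝 0) :=
      Real.tendsto_exp_atBot.comp h2
    simpa using h3.const_mul M
  obtain ⟨h1, hh1⟩ : ∃ h1 : ℕ, ∀ h, h1 ≤ h → H ≤ h ∧ M * Real.exp (-(μ * S h)) < c0 := by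
    have e1 : ∀ᶠ h in atTop, M * Real.exp (-(μ * S h)) < c0 :=
      htend.eventually_lt_const hc0
    have e2 : ∀ᶠ h : ℕ in atTop, H ≤ h := eventually_ge_atTop H
    exact eventually_atTop.1 (e2.and e1)
  have hH1 : H ≤ h1 := (hh1 h1 le_rfl).1
  have key : ∀ h : ℕ, h1 ≤ h →
      ∑ j ∈ Finset.range (m+1), (m.choose j : ℝ) * pr h (e j)
        = (-1:ℝ)^(h-H) * ∑ j ∈ T, (m.choose j : ℝ) * pr H (e j) * R h (e j) := by
    intro h hh
    have hHh : H ≤ h := le_trans hH1 hh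
    rw [← Finset.sum_filter_add_sum_filter_not (Finset.range (m+1)) Q]
    have hz : ∑ j ∈ (Finset.range (m+1)).filter (fun j => ¬ Q j),
        (m.choose j : ℝ) * pr h (e j) = 0 := by
      apply Finset.sum_eq_zero
      intro j hj
      obtain ⟨hjr, hnq⟩ := Finset.mem_filter.1 hj
      have hjm : j ≤ m := by have := Finset.mem_range.1 hjr; omega
      have hz2 : ∃ z : ℤ, e j = z := by
        by_contra hcon
        exact hnq hcon
      obtain ⟨z, hz⟩ := hz2
      rw [pr_int_zero (e j) z hz (hepos j) h
        (lt_of_lt_of_le (heH j hjm) (by exact_mod_cast hHh)), mul_zero]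
    rw [hz, add_zero, Finset.mul_sum]
    refine Finset.sum_congr rfl fun j hj => ?_
    rw [pr_split H h (e j) hHh]
    simp only [hRdef]
    ring
  have hrest : ∀ h : ℕ, h1 ≤ h →
      |∑ j ∈ T.erase j0, (m.choose j : ℝ) * pr H (e j) * R h (e j)| < c0 * R h (e j0) := by
    intro h hh
    obtain ⟨hHh, hMe⟩ := hh1 h hh
    have hRj0pos : 0 < R h (e j0) := R_pos H h (e j0) (heH j0 hj0m)
    calc |∑ j ∈ T.erase j0, (m.choose j : ℝ) * pr H (e j) * R h (e j)|
        ≤ ∑ j ∈ T.erase j0, |(m.choose j : ℝ) * pr H (e j) * R h (e j)| :=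
          Finset.abs_sum_le_sum_abs _ _
      _ ≤ ∑ j ∈ T.erase j0,
            (m.choose j : ℝ) * |pr H (e j)| * (R h (e j0) * Real.exp (-(μ * S h))) := by
          apply Finset.sum_le_sum
          intro j hj
          obtain ⟨hjne, hjT⟩ := Finset.mem_erase.1 hj
          obtain ⟨hjr, hjQ⟩ := Finset.mem_filter.1 hjT
          have hjm : j ≤ m := by have := Finset.mem_range.1 hjr; omega
          have hRpos : 0 < R h (e j) := R_pos H h (e j) (heH j hjm)
          have hlt : j0 < j := hj0min j hjQ hjne
          have hratio : R h (e j) ≤ R h (e j0) * Real.exp (-(μ * S h)) :=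
            R_ratio H h μ (e j0) (e j) hμ (hepos j0) (hestep j0 j hlt) (heH j hjm)
          rw [abs_mul, abs_mul, Nat.abs_cast, abs_of_nonneg hRpos.le]
          apply mul_le_mul_of_nonneg_left hratio
          positivity
      _ = (∑ j ∈ T.erase j0, (m.choose j : ℝ) * |pr H (e j)|)
            * (R h (e j0) * Real.exp (-(μ * S h))) := by
          rw [Finset.sum_mul]
      _ ≤ M * (R h (e j0) * Real.exp (-(μ * S h))) := by
          apply mul_le_mul_of_nonneg_right _ (by positivity)
          apply Finset.sum_le_sum_of_subset_of_nonneg (Finset.erase_subset _ _)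
          intro j _ _
          positivity
      _ = (M * Real.exp (-(μ * S h))) * R h (e j0) := by ring
      _ < c0 * R h (e j0) := mul_lt_mul_of_pos_right hMe hRj0pos
  have hsplit : ∀ h : ℕ, ∑ j ∈ T, (m.choose j : ℝ) * pr H (e j) * R h (e j)
      = (m.choose j0 : ℝ) * pr H (e j0) * R h (e j0)
        + ∑ j ∈ T.erase j0, (m.choose j : ℝ) * pr H (e j) * R h (e j) :=
    fun h => (Finset.add_sum_erase T _ hj0T).symm
  rcases lt_or_gt_of_ne hprH0 with hneg | hpos
  · have hinner : ∀ h : ℕ, h1 ≤ h →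
        ∑ j ∈ T, (m.choose j : ℝ) * pr H (e j) * R h (e j) < 0 := by
      intro h hh
      have habs := abs_lt.1 (hrest h hh)
      have hmain : (m.choose j0 : ℝ) * pr H (e j0) * R h (e j0) = -(c0 * R h (e j0)) := by
        rw [hc0def, abs_of_neg hneg]; ring
      rw [hsplit h, hmain]
      linarith [habs.2]
    obtain ⟨h, hhh, hev⟩ : ∃ h : ℕ, h1 ≤ h ∧ Even (h - H) := by
      rcases Nat.even_or_odd (h1 - H) with he' | ho'
      · exact ⟨h1, le_rfl, he'⟩
      · refine ⟨h1 + 1, by omega, ?_⟩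
        rw [show h1 + 1 - H = (h1 - H) + 1 by omega]
        exact ho'.add_one
    refine ⟨h, ?_⟩
    rw [key h hhh, hev.neg_one_pow, one_mul]
    exact hinner h hhh
  · have hinner : ∀ h : ℕ, h1 ≤ h →
        0 < ∑ j ∈ T, (m.choose j : ℝ) * pr H (e j) * R h (e j) := by
      intro h hh
      have habs := abs_lt.1 (hrest h hh)
      have hmain : (m.choose j0 : ℝ) * pr H (e j0) * R h (e j0) = c0 * R h (e j0) := by
        rw [hc0def, abs_of_pos hpos]
      rw [hsplit h, hmain]
      linarith [habs.1]
    obtain ⟨h, hhh, hod⟩ : ∃ h : ℕ, h1 ≤ h ∧ Odd (h - H) := by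
      rcases Nat.even_or_odd (h1 - H) with he' | ho'
      · refine ⟨h1 + 1, by omega, ?_⟩
        rw [show h1 + 1 - H = (h1 - H) + 1 by omega]
        exact he'.add_one
      · exact ⟨h1, le_rfl, ho'⟩
    refine ⟨h, ?_⟩
    rw [key h hhh, hod.neg_one_pow]
    nlinarith [hinner h hhh]

/-- let `μ = a/(2b)` with `a`, `b` coprime positive integers and
`μ ∉ ℤ` (i.e. `2b ∤ a`).  Then for every positive integer `k`, the Taylor expansion
at `0` of `Φ(x) = (((1+x)^{a/(2b)} + 1) (1+x)^{a/(2b)})^{bk}` has at least one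
negative coefficient. -/
theorem stmt17 (a b k : ℕ) (ha : 0 < a) (hb : 0 < b) (hk : 0 < k)
    (hcop : Nat.Coprime a b) (hni : ¬ (2 * b) ∣ a) :
    ∃ h : ℕ,
      iteratedDeriv h
          (fun x : ℝ =>
            (((1 + x) ^ ((a : ℝ) / (2 * b)) + 1) * (1 + x) ^ ((a : ℝ) / (2 * b))) ^ (b * k))
          0 / (h.factorial : ℝ) < 0 := by
  set μ : ℝ := (a : ℝ) / (2 * b) with hμdef
  set m : ℕ := b * k with hmdef
  have hb2 : (0:ℝ) < 2 * b := by positivity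
  have hμ : 0 < μ := by
    apply div_pos _ hb2
    exact_mod_cast ha
  have hμni : ∀ z : ℤ, μ ≠ z := by
    intro z hz
    apply hni
    have haz : (a:ℝ) = (z:ℝ) * (2 * b) := by
      rw [hμdef] at hz
      field_simp at hz
      linarith
    have haz' : (a:ℤ) = 2 * b * z := by exact_mod_cast (by linarith : (a:ℝ) = 2 * (b:ℝ) * z)
    exact Int.natCast_dvd_natCast.mp ⟨z, by push_cast; linarith [haz']⟩
  have hm : 0 < m := Nat.mul_pos hb hk
  have hbound : ∀ j : ℕ, j ≤ m → μ * ((m:ℝ) + j) ≤ ((a * k : ℕ) : ℝ) := by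
    intro j hj
    have hj' : (j:ℝ) ≤ (b:ℝ) * k := by
      rw [hmdef] at hj
      exact_mod_cast hj
    have ha' : (0:ℝ) ≤ a := by positivity
    rw [hμdef, hmdef, div_mul_eq_mul_div, div_le_iff₀ hb2]
    push_cast
    nlinarith
  obtain ⟨h, hsum⟩ := main_neg μ hμ hμni m (a * k) hm hbound
  refine ⟨h, ?_⟩
  have hev : (fun x : ℝ =>
        (((1 + x) ^ ((a : ℝ) / (2 * b)) + 1) * (1 + x) ^ ((a : ℝ) / (2 * b))) ^ (b * k))
      =ᶠ[nhds (0:ℝ)] (fun x : ℝ =>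
        ∑ j ∈ Finset.range (m+1), (m.choose j : ℝ) * (1 + x) ^ (μ * ((m:ℝ) + j))) := by
    filter_upwards [IsOpen.mem_nhds (isOpen_lt continuous_const continuous_id)
      (show (-1:ℝ) < 0 by norm_num)] with x hx
    exact phi_expand μ m x hx
  rw [hev.iteratedDeriv_eq h]
  rw [iteratedDeriv_sum_rpow (Finset.range (m+1)) (fun j => (m.choose j : ℝ))
    (fun j => μ * ((m:ℝ) + j)) h 0 (by norm_num)]
  apply div_neg_of_neg_of_pos
  · calc ∑ j ∈ Finset.range (m+1),
        (m.choose j : ℝ) * pr h (μ * ((m:ℝ) + j)) * (1 + 0) ^ (μ * ((m:ℝ) + j) - h)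
        = ∑ j ∈ Finset.range (m+1), (m.choose j : ℝ) * pr h (μ * ((m:ℝ) + j)) := by
          refine Finset.sum_congr rfl fun j _ => ?_
          norm_num
      _ < 0 := hsum
  · exact_mod_cast Nat.factorial_pos h
end
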